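/- In the affine Hecke algebra $H_2^{\mathrm{aff}}$ over $A = \mathbb{Z}[q^{\pm1}, v_1^{\pm1}, \dots, v_m^{\pm1}]$, with $f_1 = f_{\mathbf v}(X_1)$, $f_2 = T f_1 T$, $z$ as in Lemma (b) (i.e. $qf_{\mathbf v}(X_2) = f_2 + (q-1)zT$), and $J_{\mathbf v}$ the two-sided ideal generated by $f_1$: for every $k \in \mathbb{Z}$, the element $(q-1) X_1^k z T$ is congruent modulo $J_{\mathbf v}$ to the central element $q X_1^k f_{\mathbf v}(X_2) + q X_2^k f_{\mathbf v}(X_1)$ of $H_2^{\mathrm{aff}}$. In particular, the image of $(q-1)X_1^k z T$ in $\mathcal{K}_2^{\mathbf v} = H_2^{\mathrm{aff}}/J_{\mathbf v}$ lies in the image of the centre of $H_2^{\mathrm{aff}}$. -/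

import Mathlib

noncomputable section

/-- The ring `A = ℤ[q^{±1}, v₁^{±1}, …, v_m^{±1}]`, realized as the group
algebra of `ℤ × ℤ^m` over `ℤ`. -/
abbrev Av (m : ℕ) : Type := AddMonoidAlgebra ℤ (ℤ × (Fin m → ℤ))

/-- The element `q`. -/
def qv (m : ℕ) : Av m := AddMonoidAlgebra.single (1, 0) 1

/-- The element `vᵢ`. -/
def vv (m : ℕ) (i : Fin m) : Av m := AddMonoidAlgebra.single (0, Pi.single i 1) 1

/-- The `j`-th elementary symmetric polynomial of `v₁, …, v_m`. -/
def ev (m : ℕ) (j : ℕ) : Av m :=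
  ∑ s ∈ Finset.powersetCard j (Finset.univ : Finset (Fin m)), ∏ i ∈ s, vv m i

/-- The Laurent polynomial ring `A[X₁^{±1}, X₂^{±1}]`. -/
abbrev Lau (A : Type) [CommRing A] : Type := AddMonoidAlgebra A (ℤ × ℤ)

variable (A : Type) [CommRing A]

/-- The monomial `X₁^i X₂^j`. -/
def Xm (i j : ℤ) : Lau A := AddMonoidAlgebra.single (i, j) 1

/-- The automorphism `s` interchanging `X₁` and `X₂`. -/
def sw (p : Lau A) : Lau A := AddMonoidAlgebra.ofCoeff (Finsupp.equivMapDomain (Equiv.prodComm ℤ ℤ) p.coeff)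

/-- Constants. -/
def CC (a : A) : Lau A := algebraMap A (Lau A) a

/-- `p` is `m`-restricted. -/
def Res (m : ℕ) (p : Lau A) : Prop :=
  ∀ ab ∈ p.coeff.support, 0 ≤ ab.1 ∧ ab.1 ≤ (m : ℤ) - 1 ∧ 0 ≤ ab.2 ∧ ab.2 ≤ (m : ℤ) - 1

/-- `f_v(X₁) = ∏ᵢ (X₁ - vᵢ)`. -/
def fv1 (m : ℕ) : Lau (Av m) := ∏ i : Fin m, (Xm (Av m) 1 0 - CC (Av m) (vv m i))

/-- `f_v(X₂) = ∏ᵢ (X₂ - vᵢ)`. -/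
def fv2 (m : ℕ) : Lau (Av m) := ∏ i : Fin m, (Xm (Av m) 0 1 - CC (Av m) (vv m i))

/-- The complete homogeneous symmetric polynomial `H_k` in `X₁, X₂`. -/
def Hc (k : ℕ) : Lau A := ∑ i ∈ Finset.range (k + 1), Xm A (i : ℤ) ((k : ℤ) - (i : ℤ))

/-- The element `z = (-1)^{m+1} e_m + X₁X₂ ∑_{j=0}^{m-2} (-1)^j e_j H_{m-2-j}`. -/
def zel (m : ℕ) : Lau (Av m) :=
  CC (Av m) ((-1 : Av m) ^ (m + 1) * ev m m) +
    Xm (Av m) 1 1 *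
      ∑ j ∈ Finset.range (m - 1), CC (Av m) ((-1 : Av m) ^ j * ev m j) * Hc (Av m) (m - 2 - j)

/-! ### Auxiliary lemmas -/

lemma Xm_mul (a b c d : ℤ) : Xm A a b * Xm A c d = Xm A (a+c) (b+d) := by
  simp [Xm, AddMonoidAlgebra.single_mul_single, Prod.mk_add_mk]

lemma Xm_one : Xm A 0 0 = 1 := rfl

lemma X1_pow (n : ℕ) : (Xm A 1 0)^n = Xm A n 0 := by
  simp [Xm, AddMonoidAlgebra.single_pow, Prod.smul_mk]

lemma X2_pow (n : ℕ) : (Xm A 0 1)^n = Xm A 0 n := by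
  simp [Xm, AddMonoidAlgebra.single_pow, Prod.smul_mk]

lemma sw_eq (p : Lau A) :
    sw A p = AddMonoidAlgebra.domCongr A A (AddEquiv.prodComm : (ℤ×ℤ) ≃+ ℤ×ℤ) p := by
  ext x; simp [sw, Finsupp.equivMapDomain_apply]

lemma sw_mul (p q : Lau A) : sw A (p * q) = sw A p * sw A q := by
  rw [sw_eq, sw_eq, sw_eq, map_mul]

lemma sw_add (p q : Lau A) : sw A (p + q) = sw A p + sw A q := by
  rw [sw_eq, sw_eq, sw_eq, map_add]

lemma sw_sub (p q : Lau A) : sw A (p - q) = sw A p - sw A q := by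
  rw [sw_eq, sw_eq, sw_eq, map_sub]

lemma sw_CC (a : A) : sw A (CC A a) = CC A a := by
  rw [sw_eq, CC]; exact AlgEquiv.commutes _ a

lemma sw_Xm (i j : ℤ) : sw A (Xm A i j) = Xm A j i := by
  simp [sw, Xm, Finsupp.equivMapDomain_single]

lemma sw_prod {ι : Type*} (s : Finset ι) (f : ι → Lau A) :
    sw A (∏ i ∈ s, f i) = ∏ i ∈ s, sw A (f i) := by
  simp only [sw_eq]; exact map_prod _ _ _

lemma sw_fv1 (m : ℕ) : sw (Av m) (fv1 m) = fv2 m := by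
  rw [fv1, fv2, sw_prod]
  exact Finset.prod_congr rfl fun i _ => by rw [sw_sub, sw_Xm, sw_CC]

lemma sw_fv2 (m : ℕ) : sw (Av m) (fv2 m) = fv1 m := by
  rw [fv1, fv2, sw_prod]
  exact Finset.prod_congr rfl fun i _ => by rw [sw_sub, sw_Xm, sw_CC]

lemma prod_sub_esymm {R : Type} [CommRing R] (m : ℕ) (x : R) (c : Fin m → R) :
    ∏ i, (x - c i) = ∑ j ∈ Finset.range (m+1),
      (-1)^j * (∑ s ∈ Finset.powersetCard j (Finset.univ : Finset (Fin m)), ∏ i ∈ s, c i)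
        * x^(m-j) := by
  classical
  have h := Multiset.prod_X_sub_X_eq_sum_esymm ((Finset.univ.val : Multiset (Fin m)).map c)
  have hcard : Multiset.card ((Finset.univ.val : Multiset (Fin m)).map c) = m := by simp
  rw [hcard] at h
  have := congrArg (Polynomial.eval x) h
  simp only [Multiset.map_map, Function.comp] at this
  rw [show ((Finset.univ.val : Multiset (Fin m)).map fun i => Polynomial.X - Polynomial.C (c i)).prod
      = ∏ i, (Polynomial.X - Polynomial.C (c i)) from rfl] at this
  simp only [Polynomial.eval_prod, Polynomial.eval_sub, Polynomial.eval_X, Polynomial.eval_C,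
    Polynomial.eval_finset_sum, Polynomial.eval_mul, Polynomial.eval_pow, Polynomial.eval_one,
    Polynomial.eval_neg] at this
  rw [this]
  refine Finset.sum_congr rfl fun j _ => ?_
  rw [Finset.esymm_map_val]
  simp [mul_assoc]

lemma CC_ev (m j : ℕ) :
    CC (Av m) (ev m j) =
      ∑ s ∈ Finset.powersetCard j (Finset.univ : Finset (Fin m)), ∏ i ∈ s, CC (Av m) (vv m i) := by
  simp only [CC, ev, map_sum, map_prod]

lemma fv1_eq (m : ℕ) :
    fv1 m = ∑ j ∈ Finset.range (m+1),
      (-1)^j * CC (Av m) (ev m j) * (Xm (Av m) 1 0)^(m-j) := by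
  rw [fv1, prod_sub_esymm]
  exact Finset.sum_congr rfl fun j _ => by rw [CC_ev]

lemma fv2_eq (m : ℕ) :
    fv2 m = ∑ j ∈ Finset.range (m+1),
      (-1)^j * CC (Av m) (ev m j) * (Xm (Av m) 0 1)^(m-j) := by
  rw [fv2, prod_sub_esymm]
  exact Finset.sum_congr rfl fun j _ => by rw [CC_ev]

lemma Hc_eq (d : ℕ) :
    Hc A d = ∑ i ∈ Finset.range (d+1), (Xm A 1 0)^i * (Xm A 0 1)^(d-i) := by
  refine Finset.sum_congr rfl fun i hi => ?_
  have hi' : i ≤ d := Nat.lt_succ_iff.mp (Finset.mem_range.mp hi)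
  rw [X1_pow, X2_pow, Xm_mul]
  congr 1 <;> push_cast [Nat.cast_sub hi'] <;> ring

lemma Hc_mul (d : ℕ) :
    Hc A d * (Xm A 0 1 - Xm A 1 0) = (Xm A 0 1)^(d+1) - (Xm A 1 0)^(d+1) := by
  have h := geom_sum₂_mul (Xm A 1 0) (Xm A 0 1) (d+1)
  simp only [Nat.add_sub_cancel] at h
  rw [Hc_eq]
  linear_combination -h

lemma zel_key (m : ℕ) (hm : 1 ≤ m) :
    zel m * (Xm (Av m) 0 1 - Xm (Av m) 1 0)
      = Xm (Av m) 1 0 * fv2 m - Xm (Av m) 0 1 * fv1 m := by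
  obtain ⟨n, rfl⟩ : ∃ n, m = n + 1 := ⟨m - 1, (Nat.succ_pred_eq_of_pos hm).symm⟩
  set x := Xm (Av (n+1)) 1 0 with hx
  set y := Xm (Av (n+1)) 0 1 with hy
  set E : ℕ → Lau (Av (n+1)) := fun j => CC (Av (n+1)) (ev (n+1) j) with hE
  have hCCneg : ∀ j : ℕ, CC (Av (n+1)) ((-1 : Av (n+1))^j * ev (n+1) j)
      = (-1)^j * E j := by
    intro j; simp only [CC, map_mul, map_pow, map_neg, map_one, hE]
  have hxy : Xm (Av (n+1)) 1 1 = x * y := by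
    rw [hx, hy, Xm_mul]; norm_num
  set S := ∑ j ∈ Finset.range n,
      ((-1 : Lau (Av (n+1)))^j * E j * (x * y^(n+1-j) - y * x^(n+1-j))) with hS
  have h2 : x * fv2 (n+1) - y * fv1 (n+1) = S + (-1)^(n+1) * E (n+1) * (x - y) := by
    rw [fv1_eq, fv2_eq, Finset.mul_sum, Finset.mul_sum, ← Finset.sum_sub_distrib]
    have : ∀ j ∈ Finset.range (n+1+1),
        x * ((-1 : Lau (Av (n+1)))^j * E j * y^(n+1-j)) - y * ((-1)^j * E j * x^(n+1-j))
          = (-1)^j * E j * (x * y^(n+1-j) - y * x^(n+1-j)) := fun j _ => by ring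
    rw [Finset.sum_congr rfl this, Finset.sum_range_succ, Finset.sum_range_succ]
    rw [Nat.sub_self, Nat.add_sub_cancel_left, pow_zero, pow_one, hS]
    ring
  have h1 : zel (n+1) * (y - x) = S + (-1)^(n+1) * E (n+1) * (x - y) := by
    have hCCc : CC (Av (n+1)) ((-1 : Av (n+1))^(n+1+1) * ev (n+1) (n+1))
        = (-1)^(n+1+1) * E (n+1) := by
      simp only [CC, map_mul, map_pow, map_neg, map_one, hE]
    rw [zel]
    simp only [hCCneg, Nat.add_sub_cancel]
    rw [hCCc, hxy, add_mul, mul_assoc, Finset.mul_sum, Finset.sum_mul]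
    have : ∀ j ∈ Finset.range n,
        x * y * ((-1 : Lau (Av (n+1)))^j * E j * Hc (Av (n+1)) (n + 1 - 2 - j)) * (y - x)
          = (-1)^j * E j * (x * y^(n+1-j) - y * x^(n+1-j)) := by
      intro j hj
      have hjn : j < n := Finset.mem_range.mp hj
      have e2 : n + 1 - 2 - j = n - 1 - j := by omega
      have e3 : (n - 1 - j) + 1 = n - j := by omega
      have e4 : (n - j) + 1 = n + 1 - j := by omega
      have hH := Hc_mul (Av (n+1)) (n - 1 - j)
      rw [e3] at hH
      have hyp : y^(n+1-j) = y * y^(n-j) := by rw [← pow_succ', e4]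
      have hxp : x^(n+1-j) = x * x^(n-j) := by rw [← pow_succ', e4]
      rw [e2, hyp, hxp]
      linear_combination (x * y * ((-1 : Lau (Av (n+1)))^j * E j)) * hH
    rw [Finset.sum_congr rfl this, hS]
    ring
  rw [h1, ← h2]

/- STATEMENT 10 -/
theorem stmt10 (m : ℕ) (hm : 1 ≤ m) (H : Type) [Ring H] [Algebra (Av m) H]
    (ι : Lau (Av m) →ₐ[Av m] H) (T : H)
    (hinj : Function.Injective ι)
    (hfree : ∀ h : H, ∃! fg : Lau (Av m) × Lau (Av m), h = ι fg.1 + ι fg.2 * T)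
    (hquad : (T - algebraMap (Av m) H (qv m)) * (T + 1) = 0)
    (hTX : T * ι (Xm (Av m) 1 0) * T = algebraMap (Av m) H (qv m) * ι (Xm (Av m) 0 1))
    (hcomm : ∀ f g : Lau (Av m),
      g * (1 - Xm (Av m) 1 0 * Xm (Av m) 0 (-1)) = f - sw (Av m) f →
      T * ι f = ι (sw (Av m) f) * T + algebraMap (Av m) H (qv m - 1) * ι g) :
    ∀ k : ℤ,
      algebraMap (Av m) H (qv m - 1) * (ι (Xm (Av m) k 0 * zel m) * T) -
          ι (CC (Av m) (qv m) * (Xm (Av m) k 0 * fv2 m + Xm (Av m) 0 k * fv1 m)) ∈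
        Ideal.span {h : H | ∃ y : H, h = ι (fv1 m) * y} ∧
      ι (CC (Av m) (qv m) * (Xm (Av m) k 0 * fv2 m + Xm (Av m) 0 k * fv1 m)) ∈
        Set.center H := by
  intro k
  set Q : H := algebraMap (Av m) H (qv m) with hQ
  have hR : algebraMap (Av m) H (qv m - 1) = Q - 1 := by rw [map_sub, map_one]
  have hTT : T * T = (Q - 1) * T + Q := by
    have h : T*T + T - Q*T - Q = 0 := by rw [← hquad]; noncomm_ring
    calc T*T = (T*T + T - Q*T - Q) + ((Q-1)*T + Q) := by noncomm_ring
      _ = (Q-1)*T + Q := by rw [h, zero_add]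
  -- the Bernstein-type relation for f₁
  have hy : Xm (Av m) 0 1 * Xm (Av m) 0 (-1) = 1 := by
    rw [Xm_mul]; norm_num; rfl
  have hg : (-(fv2 m) - zel m) * (1 - Xm (Av m) 1 0 * Xm (Av m) 0 (-1))
      = fv1 m - sw (Av m) (fv1 m) := by
    rw [sw_fv1]
    have hz := zel_key m hm
    linear_combination (-(Xm (Av m) 0 (-1))) * hz + (zel m + fv1 m) * hy
  have hc1 := hcomm (fv1 m) (-(fv2 m) - zel m) hg
  rw [sw_fv1, hR] at hc1
  -- key identity : T f₁ T = Q f₂ - (Q-1) z T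
  have hQf : ι (fv2 m) * Q = Q * ι (fv2 m) := (Algebra.commutes _ _).symm
  have key : T * ι (fv1 m) * T = Q * ι (fv2 m) - (Q - 1) * (ι (zel m) * T) := by
    calc T * ι (fv1 m) * T
        = (ι (fv2 m) * T + (Q - 1) * ι (-(fv2 m) - zel m)) * T := by rw [hc1]
      _ = ι (fv2 m) * (T * T) + (Q-1) * ((-(ι (fv2 m)) - ι (zel m)) * T) := by
          rw [map_sub, map_neg]; noncomm_ring
      _ = ι (fv2 m) * ((Q-1)*T + Q) + (Q-1) * ((-(ι (fv2 m)) - ι (zel m)) * T) := by rw [hTT]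
      _ = (ι (fv2 m) * Q) * T - ι (fv2 m) * T + ι (fv2 m) * Q
            + (Q-1) * ((-(ι (fv2 m)) - ι (zel m)) * T) := by noncomm_ring
      _ = (Q * ι (fv2 m)) * T - ι (fv2 m) * T + Q * ι (fv2 m)
            + (Q-1) * ((-(ι (fv2 m)) - ι (zel m)) * T) := by rw [hQf]
      _ = Q * ι (fv2 m) - (Q - 1) * (ι (zel m) * T) := by noncomm_ring
  set a : H := ι (Xm (Av m) k 0) with ha
  set b : H := ι (Xm (Av m) 0 k) with hb
  have haQ : a * Q = Q * a := (Algebra.commutes _ _).symm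
  -- rewrite the candidate central element
  have hCCq : ∀ w : Lau (Av m), ι (CC (Av m) (qv m) * w) = Q * ι w := by
    intro w
    rw [map_mul, CC, AlgHom.commutes, hQ]
  have key2 : (Q - 1) * (ι (Xm (Av m) k 0 * zel m) * T)
      = Q * (a * ι (fv2 m)) - a * (T * ι (fv1 m) * T) := by
    rw [map_mul, ← ha]
    calc (Q - 1) * (a * ι (zel m) * T)
        = ((Q - 1) * a) * (ι (zel m) * T) := by noncomm_ring
      _ = (a * (Q - 1)) * (ι (zel m) * T) := by
          rw [sub_mul, mul_sub, mul_one, one_mul, haQ]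
      _ = a * ((Q - 1) * (ι (zel m) * T)) := by noncomm_ring
      _ = a * (Q * ι (fv2 m) - T * ι (fv1 m) * T) := by rw [key]; noncomm_ring
      _ = (a * Q) * ι (fv2 m) - a * (T * ι (fv1 m) * T) := by noncomm_ring
      _ = Q * (a * ι (fv2 m)) - a * (T * ι (fv1 m) * T) := by rw [haQ]; noncomm_ring
  have hQι : ∀ w : Lau (Av m), ι w * Q = Q * ι w := fun w => (Algebra.commutes _ _).symm
  constructor
  · -- ideal membership
    have hD : algebraMap (Av m) H (qv m - 1) * (ι (Xm (Av m) k 0 * zel m) * T) -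
        ι (CC (Av m) (qv m) * (Xm (Av m) k 0 * fv2 m + Xm (Av m) 0 k * fv1 m))
        = -((a * T) * (ι (fv1 m) * T)) - ι (fv1 m) * (Q * b) := by
      rw [hR, key2, hCCq, map_add, map_mul, map_mul, ← ha, ← hb, mul_add]
      have hbf : b * ι (fv1 m) = ι (fv1 m) * b := by
        rw [hb, ← map_mul, ← map_mul, mul_comm]
      have : Q * (b * ι (fv1 m)) = ι (fv1 m) * (Q * b) := by
        rw [hbf, ← mul_assoc, ← hQι (fv1 m), mul_assoc]
      rw [this]
      noncomm_ring
    rw [hD]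
    have m1 : ι (fv1 m) * T ∈ Ideal.span {h : H | ∃ y : H, h = ι (fv1 m) * y} :=
      Ideal.subset_span ⟨T, rfl⟩
    have m2 : (a * T) * (ι (fv1 m) * T) ∈ Ideal.span {h : H | ∃ y : H, h = ι (fv1 m) * y} :=
      Ideal.mul_mem_left _ _ m1
    have m3 : ι (fv1 m) * (Q * b) ∈ Ideal.span {h : H | ∃ y : H, h = ι (fv1 m) * y} :=
      Ideal.subset_span ⟨Q * b, rfl⟩
    exact sub_mem (neg_mem m2) m3
  · -- centrality
    set c : Lau (Av m) := CC (Av m) (qv m) * (Xm (Av m) k 0 * fv2 m + Xm (Av m) 0 k * fv1 m)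
      with hc
    have hswc : sw (Av m) c = c := by
      rw [hc, sw_mul, sw_add, sw_mul, sw_mul, sw_CC, sw_Xm, sw_Xm, sw_fv1, sw_fv2]
      ring
    have hTc : T * ι c = ι c * T := by
      have h0 : (0 : Lau (Av m)) * (1 - Xm (Av m) 1 0 * Xm (Av m) 0 (-1)) = c - sw (Av m) c := by
        rw [hswc, sub_self, zero_mul]
      have := hcomm c 0 h0
      rw [hswc, map_zero, mul_zero, add_zero] at this
      exact this
    rw [Semigroup.mem_center_iff]
    intro h
    obtain ⟨⟨f, g⟩, hfg, -⟩ := hfree h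
    rw [hfg]
    have e1 : ι f * ι c = ι c * ι f := by rw [← map_mul, ← map_mul, mul_comm]
    have e2 : ι g * ι c = ι c * ι g := by rw [← map_mul, ← map_mul, mul_comm]
    calc (ι f + ι g * T) * ι c = ι f * ι c + ι g * (T * ι c) := by noncomm_ring
      _ = ι c * ι f + ι g * (ι c * T) := by rw [e1, hTc]
      _ = ι c * ι f + (ι g * ι c) * T := by noncomm_ring
      _ = ι c * ι f + (ι c * ι g) * T := by rw [e2]
      _ = ι c * (ι f + ι g * T) := by noncomm_ring
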